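/- If a continuous linear functional F on the space of finite complex Borel measures M(X) acts invariantly on measures μ and ν with distinct eigenvalues F_μ ≠ F_ν (meaning F·μ = F_μ μ and F·ν = F_ν ν), then μ and ν are mutually singular. -/

import Mathlib

open MeasureTheory

/-- The real part of a complex measure, as a signed measure. -/
noncomputable def cmRe {X : Type*} [MeasurableSpace X] (ν : ComplexMeasure X) :
    SignedMeasure X :=
  ν.mapRange Complex.reLm.toAddMonoidHom Complex.continuous_re

/-- The imaginary part of a complex measure, as a signed measure. -/
noncomputable def cmIm {X : Type*} [MeasurableSpace X] (ν : ComplexMeasure X) :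
    SignedMeasure X :=
  ν.mapRange Complex.imLm.toAddMonoidHom Complex.continuous_im

/-- A total variation measure for a complex measure (equivalent to the usual one). -/
noncomputable def tvOf {X : Type*} [MeasurableSpace X] (ν : ComplexMeasure X) : Measure X :=
  (cmRe ν).totalVariation + (cmIm ν).totalVariation

open Set

lemma tv_null_of_forall {α : Type*} [MeasurableSpace α] (s : SignedMeasure α) {t : Set α}
    (ht : MeasurableSet t) (h : ∀ u, MeasurableSet u → u ⊆ t → s u = 0) :
    s.totalVariation t = 0 := by
  obtain ⟨i, hi₁, hi₂, hi₃, hpos, hneg⟩ := s.toJordanDecomposition_spec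
  rw [SignedMeasure.totalVariation, Measure.add_apply, hpos, hneg,
    SignedMeasure.toMeasureOfZeroLE_apply _ _ _ ht,
    SignedMeasure.toMeasureOfLEZero_apply _ _ _ ht]
  have h1 : s (i ∩ t) = 0 := h _ (hi₁.inter ht) inter_subset_right
  have h2 : s (iᶜ ∩ t) = 0 := h _ (hi₁.compl.inter ht) inter_subset_right
  simp [h1, h2]

lemma cmRe_le_tvOf {X : Type*} [MeasurableSpace X] (ν : ComplexMeasure X) (t : Set X) :
    (cmRe ν).totalVariation t ≤ tvOf ν t :=
  le_trans (by rfl) (self_le_add_right _ _)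

lemma cmIm_le_tvOf {X : Type*} [MeasurableSpace X] (ν : ComplexMeasure X) (t : Set X) :
    (cmIm ν).totalVariation t ≤ tvOf ν t :=
  le_trans (by rfl) (self_le_add_left _ _)

lemma tvOf_null_of_parts {X : Type*} [MeasurableSpace X] (ν : ComplexMeasure X) {t : Set X}
    (h1 : (cmRe ν).totalVariation t = 0) (h2 : (cmIm ν).totalVariation t = 0) :
    tvOf ν t = 0 := by
  simp [tvOf, Measure.add_apply, h1, h2]


/-- If a continuous linear functional on `M(X)` — encoded, via Šreider's theorem, by its
generalized functional `g`, assigning to each measure `ρ` its localized density `g ρ`,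
compatibly with absolute continuity — acts invariantly on `μ` and `ν` with distinct
eigenvalues `cμ ≠ cν`, then `μ` and `ν` are mutually singular. -/
theorem stmt15 {X : Type*} [MetricSpace X] [CompactSpace X] [MeasurableSpace X] [BorelSpace X]
    (g : ComplexMeasure X → X → ℂ)
    (hg : ∀ ρ σ : ComplexMeasure X, tvOf σ ≪ tvOf ρ → g ρ =ᵐ[tvOf σ] g σ)
    (μ ν : ComplexMeasure X) (cμ cν : ℂ)
    (hμ : g μ =ᵐ[tvOf μ] fun _ => cμ) (hν : g ν =ᵐ[tvOf ν] fun _ => cν)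
    (hne : cμ ≠ cν) :
    tvOf μ ⟂ₘ tvOf ν := by
  set τ := tvOf μ with hτ
  set η := tvOf ν with hη
  have fin : ∀ ρ : ComplexMeasure X, IsFiniteMeasure (tvOf ρ) := fun ρ => by
    unfold tvOf SignedMeasure.totalVariation; infer_instance
  haveI := fin μ; haveI := fin ν
  obtain ⟨S, hSm, hS1, hS2⟩ := η.mutuallySingular_singularPart τ
  -- hS1 : η.singularPart τ S = 0, hS2 : τ Sᶜ = 0
  -- key fact: for τ-null measurable u, η (u ∩ S) = 0
  have h0 : ∀ u : Set X, τ u = 0 → η (u ∩ S) = 0 := by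
    intro u hu
    have hdec := η.haveLebesgueDecomposition_add τ
    have h1 : η.singularPart τ (u ∩ S) = 0 :=
      measure_mono_null inter_subset_right hS1
    have h2 : τ.withDensity (η.rnDeriv τ) (u ∩ S) = 0 :=
      (withDensity_absolutelyContinuous τ _) (measure_mono_null inter_subset_left hu)
    calc η (u ∩ S) = (η.singularPart τ + τ.withDensity (η.rnDeriv τ)) (u ∩ S) := by
          rw [← hdec]
      _ = 0 := by rw [Measure.add_apply, h1, h2, add_zero]
  set σ : ComplexMeasure X := ν.restrict S with hσ
  have happly : ∀ u : Set X, MeasurableSet u →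
      (cmRe σ u = cmRe ν (u ∩ S) ∧ cmIm σ u = cmIm ν (u ∩ S)) := by
    intro u hu
    constructor <;>
      simp [cmRe, cmIm, hσ, VectorMeasure.mapRange_apply, VectorMeasure.restrict_apply ν hSm hu] <;>
        erw [VectorMeasure.mapRange_apply, VectorMeasure.mapRange_apply, VectorMeasure.restrict_apply ν hSm hu]
  -- each signed part of σ vanishes on sets whose image under ∩ S is η-null
  have hpart : ∀ t : Set X, MeasurableSet t → (∀ u : Set X, MeasurableSet u → u ⊆ t →
      η (u ∩ S) = 0) → tvOf σ t = 0 := by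
    intro t htm hnull
    refine tvOf_null_of_parts σ ?_ ?_ <;>
      refine tv_null_of_forall _ htm fun u hum hut => ?_
    · rw [(happly u hum).1]
      exact SignedMeasure.null_of_totalVariation_zero _
        (le_antisymm (le_trans (cmRe_le_tvOf ν _) (le_of_eq (hnull u hum hut))) zero_le)
    · rw [(happly u hum).2]
      exact SignedMeasure.null_of_totalVariation_zero _
        (le_antisymm (le_trans (cmIm_le_tvOf ν _) (le_of_eq (hnull u hum hut))) zero_le)
  have hacτ : tvOf σ ≪ τ := by
    refine Measure.AbsolutelyContinuous.mk fun t htm ht0 => ?_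
    exact hpart t htm fun u hum hut => h0 u (measure_mono_null hut ht0)
  have hacη : tvOf σ ≪ η := by
    refine Measure.AbsolutelyContinuous.mk fun t htm ht0 => ?_
    exact hpart t htm fun u hum hut =>
      measure_mono_null (inter_subset_left.trans hut) ht0
  -- the eigenvalue clash forces tvOf σ = 0
  have hc : (fun _ : X => cμ) =ᵐ[tvOf σ] fun _ => cν := by
    have e1 : g μ =ᵐ[tvOf σ] fun _ => cμ := hμ.filter_mono (Measure.ae_mono' hacτ)
    have e2 : g ν =ᵐ[tvOf σ] fun _ => cν := hν.filter_mono (Measure.ae_mono' hacη)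
    exact (e1.symm.trans (hg μ σ hacτ)).trans ((hg ν σ hacη).symm.trans e2)
  have hσ0 : tvOf σ = 0 := by
    rw [Filter.EventuallyEq, ae_iff] at hc
    simp only [hne, not_false_iff] at hc
    simpa [Measure.measure_univ_eq_zero] using hc
  -- hence η S = 0
  have hηS : η S = 0 := by
    refine tvOf_null_of_parts ν ?_ ?_ <;>
      refine tv_null_of_forall _ hSm fun u hum huS => ?_
    · have h := (happly u hum).1
      rw [inter_eq_self_of_subset_left huS] at h
      rw [← h]
      exact SignedMeasure.null_of_totalVariation_zero _
        (le_antisymm (le_trans (cmRe_le_tvOf σ u) (by rw [hσ0]; simp)) zero_le)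
    · have h := (happly u hum).2
      rw [inter_eq_self_of_subset_left huS] at h
      rw [← h]
      exact SignedMeasure.null_of_totalVariation_zero _
        (le_antisymm (le_trans (cmIm_le_tvOf σ u) (by rw [hσ0]; simp)) zero_le)
  exact ⟨Sᶜ, hSm.compl, hS2, by simpa using hηS⟩
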